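/- Let R be a commutative ring, π ∈ R a non-zero-divisor, and C• a cochain complex of R-modules each of which has bounded π-torsion. Fix i ∈ ℤ and assume that H^i(C•) and H^{i+1}(C•) have bounded π-torsion. Then the natural map gives an isomorphism H^i(lim_n C•/π^n) ≅ lim_n H^i(C•)/π^n between the i-th cohomology of the degreewise π-adic completion of C• and the π-adic completion of H^i(C•). -/

import Mathlib

/-- An `R`-module `M` has bounded `π`-torsion if the chain of `π^n`-torsion
submodules stabilizes. -/
def HasBoundedTorsion (R : Type*) [CommRing R] (π : R) (M : Type*) [AddCommGroup M]
    [Module R M] : Prop :=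
  ∃ n : ℕ, ∀ m : ℕ, n ≤ m →
    Submodule.torsionBy R M (π ^ n) = Submodule.torsionBy R M (π ^ m)

/-- The cohomology of a cochain complex `(C, d)` at the spot `j + 1`:
`ker (d (j+1)) / im (d j)`. -/
abbrev CohomologyAt {R : Type*} [CommRing R] {C : ℤ → Type*} [∀ i, AddCommGroup (C i)]
    [∀ i, Module R (C i)] (d : ∀ i, C i →ₗ[R] C (i + 1)) (j : ℤ) : Type _ :=
  ↥(LinearMap.ker (d (j + 1))) ⧸
    Submodule.comap (LinearMap.ker (d (j + 1))).subtype (LinearMap.range (d j))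


open LinearMap Pointwise

section BTLemmas

variable {R : Type*} [CommRing R] {π : R}
variable {M : Type*} [AddCommGroup M] [Module R M]
variable {N : Type*} [AddCommGroup N] [Module R N]

theorem HasBoundedTorsion.congr (e : M ≃ₗ[R] N) (h : HasBoundedTorsion R π M) :
    HasBoundedTorsion R π N := by
  obtain ⟨n, hn⟩ := h
  refine ⟨n, fun m hm => ?_⟩
  have key : ∀ (a : R) (x : N), x ∈ Submodule.torsionBy R N a ↔
      e.symm x ∈ Submodule.torsionBy R M a := by
    intro a x
    simp only [Submodule.mem_torsionBy_iff]
    constructor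
    · intro hx; rw [← map_smul, hx, map_zero]
    · intro hx
      have := congrArg e hx
      rwa [map_smul, e.apply_symm_apply, map_zero] at this
  ext x
  rw [key, key, hn m hm]

theorem HasBoundedTorsion.submodule (S : Submodule R M) (h : HasBoundedTorsion R π M) :
    HasBoundedTorsion R π S := by
  obtain ⟨n, hn⟩ := h
  refine ⟨n, fun m hm => ?_⟩
  have key : ∀ (a : R) (x : S), x ∈ Submodule.torsionBy R S a ↔
      (x : M) ∈ Submodule.torsionBy R M a := by
    intro a x
    simp only [Submodule.mem_torsionBy_iff]
    constructor
    · intro hx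
      rw [show a • (x : M) = ((a • x : S) : M) from rfl, hx]; rfl
    · intro hx
      exact Subtype.ext hx
  ext x
  rw [key, key, hn m hm]

theorem HasBoundedTorsion.extension (S : Submodule R M) (hS : HasBoundedTorsion R π S)
    (hQ : HasBoundedTorsion R π (M ⧸ S)) : HasBoundedTorsion R π M := by
  obtain ⟨n₁, hn₁⟩ := hS
  obtain ⟨n₂, hn₂⟩ := hQ
  refine ⟨n₁ + n₂, fun m hm => ?_⟩
  apply le_antisymm
  · exact Submodule.torsionBy_le_torsionBy_of_dvd _ _ (pow_dvd_pow π hm)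
  · intro x hx
    rw [Submodule.mem_torsionBy_iff] at hx ⊢
    have hq : (Submodule.Quotient.mk x : M ⧸ S) ∈ Submodule.torsionBy R (M ⧸ S) (π ^ m) := by
      rw [Submodule.mem_torsionBy_iff, ← Submodule.Quotient.mk_smul, hx]; rfl
    rw [← hn₂ m (le_trans (Nat.le_add_left _ _) hm)] at hq
    rw [Submodule.mem_torsionBy_iff] at hq
    have hmem : π ^ n₂ • x ∈ S := by
      rwa [← Submodule.Quotient.mk_eq_zero, Submodule.Quotient.mk_smul]
    have hts : (⟨π ^ n₂ • x, hmem⟩ : S) ∈ Submodule.torsionBy R S (π ^ (m - n₂)) := by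
      rw [Submodule.mem_torsionBy_iff]
      apply Subtype.ext
      show π ^ (m - n₂) • π ^ n₂ • x = 0
      rw [smul_smul, ← pow_add, Nat.sub_add_cancel (le_trans (Nat.le_add_left _ _) hm), hx]
    rw [← hn₁ (m - n₂) (by omega)] at hts
    rw [Submodule.mem_torsionBy_iff] at hts
    have : π ^ n₁ • π ^ n₂ • x = 0 := congrArg Subtype.val hts
    rw [smul_smul, ← pow_add] at this
    exact this

theorem span_pow_smul_top_eq (π : R) (n : ℕ) :
    ((Ideal.span {π}) ^ n • ⊤ : Submodule R M) = π ^ n • ⊤ := by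
  rw [Ideal.span_singleton_pow, Submodule.ideal_span_singleton_smul]

/-- Artin–Rees type property for a submodule whose quotient has bounded torsion. -/
theorem artinRees_of_boundedTorsion (π : R) (p : Submodule R M)
    (h : HasBoundedTorsion R π (M ⧸ p)) :
    ∃ k : ℕ, ∀ n ≥ k, (Ideal.span {π}) ^ n • ⊤ ⊓ p
      = (Ideal.span {π}) ^ (n - k) • ((Ideal.span {π}) ^ k • ⊤ ⊓ p) := by
  obtain ⟨c, hc⟩ := h
  refine ⟨c, fun n hn => ?_⟩
  apply le_antisymm
  · rintro x ⟨hx1, hx2⟩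
    rw [span_pow_smul_top_eq, Submodule.coe_pointwise_smul] at hx1
    obtain ⟨b, -, hb⟩ := hx1
    change π ^ n • b = x at hb
    have hq : (Submodule.Quotient.mk b : M ⧸ p) ∈ Submodule.torsionBy R (M ⧸ p) (π ^ n) := by
      rw [Submodule.mem_torsionBy_iff, ← Submodule.Quotient.mk_smul, hb,
        Submodule.Quotient.mk_eq_zero]
      exact hx2
    rw [← hc n hn, Submodule.mem_torsionBy_iff] at hq
    have hmem : π ^ c • b ∈ p := by
      rwa [← Submodule.Quotient.mk_eq_zero, Submodule.Quotient.mk_smul]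
    have hx : x = π ^ (n - c) • (π ^ c • b) := by
      rw [smul_smul, ← pow_add, Nat.sub_add_cancel hn, hb]
    rw [Ideal.span_singleton_pow, Submodule.ideal_span_singleton_smul, hx]
    refine Submodule.smul_mem_pointwise_smul _ _ _ ⟨?_, hmem⟩
    rw [span_pow_smul_top_eq]
    exact Submodule.smul_mem_pointwise_smul _ _ _ Submodule.mem_top
  · apply le_inf
    · refine le_trans (smul_mono_right _ inf_le_left) ?_
      rw [← Submodule.smul_assoc, smul_eq_mul, ← pow_add, Nat.sub_add_cancel hn]
    · exact le_trans (smul_mono_right _ inf_le_right) Submodule.smul_le_right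

end BTLemmas


open _root_.LinearMap

namespace AdicCompletionAR

open AdicCompletion

variable {R : Type u} [CommRing R] {I : Ideal R}
variable {M : Type v} [AddCommGroup M] [Module R M]
variable {N : Type w} [AddCommGroup N] [Module R N]
variable {P : Type t} [AddCommGroup P] [Module R P]

section Injectivity

variable (I)

/-- Adic completion preserves injectivity given the Artin-Rees property. -/
theorem map_injective_ar {f : M →ₗ[R] N} (hf : Function.Injective f)
    (har : ∃ k : ℕ, ∀ n ≥ k, I ^ n • ⊤ ⊓ LinearMap.range f
      = I ^ (n - k) • (I ^ k • ⊤ ⊓ LinearMap.range f)) :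
    Function.Injective (map I f) := by
  obtain ⟨k, hk⟩ := har
  rw [← LinearMap.ker_eq_bot, LinearMap.ker_eq_bot']
  intro x
  apply AdicCompletion.induction_on I M x (fun a ↦ ?_)
  intro hx
  refine AdicCompletion.mk_zero_of _ _ _ ⟨42, fun n _ ↦ ⟨n + k, by omega, n, by omega, ?_⟩⟩
  rw [← Submodule.comap_map_eq_of_injective hf (I ^ n • ⊤ : Submodule R M),
    Submodule.map_smul'', Submodule.map_top]
  apply (smul_mono_right _ inf_le_right : I ^ n • (I ^ k • ⊤ ⊓ range f) ≤ _)
  nth_rw 1 [show n = n + k - k by omega]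
  rw [← hk (n + k) (show n + k ≥ k by omega)]
  exact ⟨by simpa using congrArg (fun x ↦ x.val (n + k)) hx, ⟨a (n + k), rfl⟩⟩

end Injectivity

section

variable {f : M →ₗ[R] N} {g : N →ₗ[R] P} (hf : Function.Injective f)
  (hfg : Function.Exact f g) (hg : Function.Surjective g)

section

variable {k : ℕ}
  (hkn : ∀ n ≥ k, I ^ n • ⊤ ⊓ LinearMap.range f = I ^ (n - k) • (I ^ k • ⊤ ⊓ LinearMap.range f))
  (x : AdicCauchySequence I N) (hker : ∀ (n : ℕ), g (x n) ∈ (I ^ n • ⊤ : Submodule R P))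

/- In each step, a preimage is constructed from the preimage of the previous step by
adding this delta. -/
private noncomputable def mapExactAuxDelta {n : ℕ} {d : N}
    (hdmem : d ∈ (I ^ (k + n + 1) • ⊤ : Submodule R N)) {y yₙ : M}
    (hd : f y = x (k + n + 1) - d) (hyₙ : f yₙ - x (k + n) ∈ (I ^ (k + n) • ⊤ : Submodule R N)) :
    { d : (I ^ n • ⊤ : Submodule R M)
      | f (yₙ + d) - x (k + n + 1) ∈ (I ^ (k + n + 1) • ⊤ : Submodule R N) } :=
  have h : f (y - yₙ) ∈ (I ^ (k + n) • ⊤ : Submodule R N) := by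
    simp only [map_sub, hd]
    convert_to x (k + n + 1) - x (k + n) - d - (f yₙ - x (k + n)) ∈ I ^ (k + n) • ⊤
    · abel
    · refine Submodule.sub_mem _ (Submodule.sub_mem _ ?_ ?_) hyₙ
      · rw [← Submodule.Quotient.eq]
        exact AdicCauchySequence.mk_eq_mk (by omega) _
      · exact (Submodule.smul_mono_left (Ideal.pow_le_pow_right (by omega))) hdmem
  have hincl : I ^ (k + n - k) • (I ^ k • ⊤ ⊓ range f) ≤ I ^ (k + n - k) • (range f) :=
    smul_mono_right _ inf_le_right
  have hyyₙ : y - yₙ ∈ (I ^ n • ⊤ : Submodule R M) := by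
    convert_to y - yₙ ∈ (I ^ (k + n - k) • ⊤ : Submodule R M)
    · simp
    · rw [← Submodule.comap_map_eq_of_injective hf (I ^ (k + n - k) • ⊤ : Submodule R M),
        Submodule.map_smul'', Submodule.map_top]
      apply hincl
      rw [← hkn (k + n) (by omega)]
      exact ⟨h, ⟨y - yₙ, rfl⟩⟩
  ⟨⟨y - yₙ, hyyₙ⟩, by simpa [hd, Nat.succ_eq_add_one, Nat.add_assoc]⟩

open Submodule

include hfg in
/- Inductively construct preimage of cauchy sequence in kernel of `g.adicCompletion I`. -/
private noncomputable def mapExactAux :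
    (n : ℕ) → { a : M | f a - x (k + n) ∈ (I ^ (k + n) • ⊤ : Submodule R N) }
  | .zero =>
      let d := (h2 0).choose
      let y := (h2 0).choose_spec.choose
      have hdy : f y = x (k + 0) - d := (h2 0).choose_spec.choose_spec.right
      have hdmem := (h2 0).choose_spec.choose_spec.left
      ⟨y, by simpa [hdy]⟩
  | .succ n =>
      let d := (h2 <| n + 1).choose
      let y := (h2 <| n + 1).choose_spec.choose
      have hdy : f y = x (k + (n + 1)) - d := (h2 <| n + 1).choose_spec.choose_spec.right
      have hdmem := (h2 <| n + 1).choose_spec.choose_spec.left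
      let ⟨yₙ, (hyₙ : f yₙ - x (k + n) ∈ (I ^ (k + n) • ⊤ : Submodule R N))⟩ :=
        mapExactAux n
      let ⟨d, hd⟩ := mapExactAuxDelta hf hkn x hdmem hdy hyₙ
      ⟨yₙ + d, hd⟩
 where
  h1 (n : ℕ) : g (x (k + n)) ∈ Submodule.map g (I ^ (k + n) • ⊤ : Submodule R N) := by
    rw [map_smul'', Submodule.map_top, range_eq_top.mpr hg]
    exact hker (k + n)
  h2 (n : ℕ) : ∃ (d : N) (y : M),
      d ∈ (I ^ (k + n) • ⊤ : Submodule R N) ∧ f y = x (k + n) - d := by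
    obtain ⟨d, hdmem, hd⟩ := h1 n
    obtain ⟨y, hdy⟩ := (hfg (x (k + n) - d)).mp (by simp [hd])
    exact ⟨d, y, hdmem, hdy⟩

end

include hf hfg hg in
/-- `AdicCompletion` is exact given the Artin-Rees property for `range f`. -/
theorem map_exact_ar
    (har : ∃ k : ℕ, ∀ n ≥ k, I ^ n • ⊤ ⊓ LinearMap.range f
      = I ^ (n - k) • (I ^ k • ⊤ ⊓ LinearMap.range f)) :
    Function.Exact (map I f) (map I g) := by
  refine LinearMap.exact_of_comp_eq_zero_of_ker_le_range ?_ (fun y ↦ ?_)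
  · rw [map_comp, hfg.linearMap_comp_eq_zero, AdicCompletion.map_zero]
  · apply AdicCompletion.induction_on I N y (fun b ↦ ?_)
    intro hz
    obtain ⟨k, hk⟩ := har
    have hb (n : ℕ) : g (b n) ∈ (I ^ n • ⊤ : Submodule R P) := by
      simpa using congrArg (fun x ↦ x.val n) hz
    let a := mapExactAux hf hfg hg hk b hb
    refine ⟨AdicCompletion.mk I M (AdicCauchySequence.mk I M (fun n ↦ (a n : M)) ?_), ?_⟩
    · refine fun n ↦ SModEq.symm ?_
      simp [a, mapExactAux, SModEq]
    · ext n
      suffices h : Submodule.Quotient.mk (p := (I ^ n • ⊤ : Submodule R N)) (f (a n)) =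
            Submodule.Quotient.mk (p := (I ^ n • ⊤ : Submodule R N)) (b (k + n)) by
        simp [h, AdicCauchySequence.mk_eq_mk (show n ≤ k + n by omega)]
      rw [Submodule.Quotient.eq]
      have hle : (I ^ (k + n) • ⊤ : Submodule R N) ≤ (I ^ n • ⊤ : Submodule R N) :=
        Submodule.smul_mono_left (Ideal.pow_le_pow_right (by omega))
      exact hle (a n).property

end

end AdicCompletionAR


section BTExtra
open LinearMap Pointwise
variable {R : Type*} [CommRing R] {π : R}
variable {M : Type*} [AddCommGroup M] [Module R M]

theorem artinRees_subtype (π : R) (S : Submodule R M)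
    (h : HasBoundedTorsion R π (M ⧸ S)) :
    ∃ k : ℕ, ∀ n ≥ k, (Ideal.span {π}) ^ n • ⊤ ⊓ LinearMap.range S.subtype
      = (Ideal.span {π}) ^ (n - k) •
        ((Ideal.span {π}) ^ k • ⊤ ⊓ LinearMap.range S.subtype) := by
  simp only [Submodule.range_subtype]
  exact artinRees_of_boundedTorsion π S h

/-- If `P ≤ Q ≤ M`, `Q/P` and `M/Q` have bounded torsion, then so does `M/P`. -/
theorem hbt_quot_of_le (P Q : Submodule R M) (hPQ : P ≤ Q)
    (h1 : HasBoundedTorsion R π (Q ⧸ Submodule.comap Q.subtype P))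
    (h2 : HasBoundedTorsion R π (M ⧸ Q)) : HasBoundedTorsion R π (M ⧸ P) := by
  apply HasBoundedTorsion.extension (Q.map P.mkQ)
  · have hker : ker (P.mkQ ∘ₗ Q.subtype) = Submodule.comap Q.subtype P := by
      rw [ker_comp, Submodule.ker_mkQ]
    have hran : range (P.mkQ ∘ₗ Q.subtype) = Q.map P.mkQ := by
      rw [range_comp, Submodule.range_subtype]
    have e1 := Submodule.quotEquivOfEq _ _ hker.symm
    have e2 := (P.mkQ ∘ₗ Q.subtype).quotKerEquivRange
    have e3 := LinearEquiv.ofEq _ _ hran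
    exact ((h1.congr e1).congr e2).congr e3
  · exact h2.congr (Submodule.quotientQuotientEquivQuotient P Q hPQ).symm

end BTExtra

open LinearMap AdicCompletion AdicCompletionAR in
set_option maxHeartbeats 1600000 in
/-- For a cochain complex `C•` of `R`-modules with bounded `π`-torsion
terms, if `H^{j+1}(C•)` and `H^{j+2}(C•)` have bounded `π`-torsion, then the cohomology
of the degreewise `π`-adic completion of `C•` at the spot `j+1` is isomorphic to the
`π`-adic completion of `H^{j+1}(C•)`. -/
theorem statement1 (R : Type*) [CommRing R] (π : R) (hπ : π ∈ nonZeroDivisors R)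
    (C : ℤ → Type*) [∀ i, AddCommGroup (C i)] [∀ i, Module R (C i)]
    (d : ∀ i, C i →ₗ[R] C (i + 1))
    (hdd : ∀ i, (d (i + 1)).comp (d i) = 0)
    (hC : ∀ i, HasBoundedTorsion R π (C i))
    (j : ℤ)
    (hH : HasBoundedTorsion R π (CohomologyAt d j))
    (hH' : HasBoundedTorsion R π (CohomologyAt d (j + 1))) :
    Nonempty
      (CohomologyAt
          (fun i => (AdicCompletion.map (Ideal.span {π}) (d i)).restrictScalars R) j
        ≃ₗ[R] AdicCompletion (Ideal.span {π}) (CohomologyAt d j)) := by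
  set I : Ideal R := Ideal.span {π} with hI
  set Z : Submodule R (C (j + 1)) := ker (d (j + 1)) with hZ
  set B₀ : Submodule R Z := Submodule.comap Z.subtype (range (d j)) with hB₀
  -- bounded torsion facts
  have hbtBZ : HasBoundedTorsion R π ((C (j + 1)) ⧸ Z) :=
    ((hC (j + 1 + 1)).submodule (range (d (j + 1)))).congr ((d (j + 1)).quotKerEquivRange).symm
  have hle : range (d (j + 1)) ≤ ker (d (j + 1 + 1)) := by
    rintro x ⟨y, rfl⟩
    have := congrArg (fun f => f y) (hdd (j + 1))
    simpa using this
  have hbtD : HasBoundedTorsion R π ((C (j + 1 + 1)) ⧸ range (d (j + 1))) := by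
    refine hbt_quot_of_le _ (ker (d (j + 1 + 1))) hle hH' ?_
    exact ((hC (j + 1 + 1 + 1)).submodule _).congr ((d (j + 1 + 1)).quotKerEquivRange).symm
  -- the factorization of d (j+1) through the quotient by Z
  set e : (C (j + 1) ⧸ Z) →ₗ[R] C (j + 1 + 1) := Z.liftQ (d (j + 1)) le_rfl with he
  have hfactor : e ∘ₗ Z.mkQ = d (j + 1) := Submodule.liftQ_mkQ _ _ _
  have he_inj : Function.Injective e := by
    rw [← LinearMap.ker_eq_bot]
    exact Submodule.ker_liftQ_eq_bot _ _ _ le_rfl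
  have hrange_e : range e = range (d (j + 1)) := Submodule.range_liftQ _ _ _
  have hbt_e : HasBoundedTorsion R π ((C (j + 1 + 1)) ⧸ range e) :=
    hbtD.congr (Submodule.quotEquivOfEq _ _ hrange_e.symm)
  -- exactness results on completions
  have exact1 : Function.Exact (map I Z.subtype) (map I Z.mkQ) :=
    map_exact_ar (Submodule.injective_subtype Z) (LinearMap.exact_subtype_mkQ Z)
      (Submodule.mkQ_surjective Z) (artinRees_subtype π Z hbtBZ)
  have hinj_e : Function.Injective (map I e) :=
    map_injective_ar I he_inj (artinRees_of_boundedTorsion π (range e) hbt_e)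
  have hinj_ι : Function.Injective (map I Z.subtype) :=
    map_injective_ar I (Submodule.injective_subtype Z) (artinRees_subtype π Z hbtBZ)
  have exact2 : Function.Exact (map I B₀.subtype) (map I B₀.mkQ) :=
    map_exact_ar (Submodule.injective_subtype B₀) (LinearMap.exact_subtype_mkQ B₀)
      (Submodule.mkQ_surjective B₀) (artinRees_subtype π B₀ hH)
  -- the kernel of the completed differential is the image of the completion of Z
  have hKR : ker (map I (d (j + 1))) = range (map I Z.subtype) := by
    rw [← hfactor, ← AdicCompletion.map_comp, ker_comp, (ker_eq_bot (M := _)).mpr hinj_e,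
      Submodule.comap_bot, LinearMap.exact_iff.mp exact1]
  -- the codomain-restricted d j
  have hmemZ : ∀ a : C j, d j a ∈ Z := by
    intro a
    have := congrArg (fun f => f a) (hdd j)
    simpa [hZ] using this
  set g' : C j →ₗ[R] Z := (d j).codRestrict Z hmemZ with hg'
  have hmemB₀ : ∀ a : C j, g' a ∈ B₀ := fun a => ⟨a, rfl⟩
  set g'' : C j →ₗ[R] B₀ := g'.codRestrict B₀ hmemB₀ with hg''
  have hg''_surj : Function.Surjective g'' := by
    rintro ⟨⟨z, hz⟩, a, ha⟩
    exact ⟨a, Subtype.ext (Subtype.ext ha)⟩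
  have hdj : d j = Z.subtype ∘ₗ g' := rfl
  have hg'fact : g' = B₀.subtype ∘ₗ g'' := rfl
  have hzero : B₀.mkQ ∘ₗ g' = 0 := by
    ext a
    simp only [coe_comp, Function.comp_apply, Submodule.mkQ_apply, LinearMap.zero_apply,
      Submodule.Quotient.mk_eq_zero]
    exact hmemB₀ a
  -- abbreviations for the completed complex
  set F : ∀ i, AdicCompletion I (C i) →ₗ[R] AdicCompletion I (C (i + 1)) :=
    fun i => (AdicCompletion.map I (d i)).restrictScalars R with hF
  -- the embedding ι of the completion of Z
  set ι : AdicCompletion I Z →ₗ[R] AdicCompletion I (C (j + 1)) :=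
    (map I Z.subtype).restrictScalars R with hι
  have hmem_ker : ∀ y : AdicCompletion I (C (j + 1)),
      y ∈ ker (F (j + 1)) ↔ y ∈ range (map I Z.subtype) := by
    intro y
    rw [← hKR]
    exact Iff.rfl
  set κ : AdicCompletion I Z →ₗ[R] ker (F (j + 1)) :=
    ι.codRestrict (ker (F (j + 1)))
      (fun z => (hmem_ker (ι z)).mpr ⟨z, rfl⟩) with hκ
  have hκ_bij : Function.Bijective κ := by
    constructor
    · intro a b hab
      exact hinj_ι (congrArg Subtype.val hab)
    · rintro ⟨y, hy⟩
      obtain ⟨z, hz⟩ := (hmem_ker y).mp hy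
      exact ⟨z, Subtype.ext hz⟩
  set eKer : AdicCompletion I Z ≃ₗ[R] ker (F (j + 1)) := LinearEquiv.ofBijective κ hκ_bij
  set ψ : AdicCompletion I Z →ₗ[R] AdicCompletion I (CohomologyAt d j) :=
    (map I B₀.mkQ).restrictScalars R with hψ
  have hψ_surj : Function.Surjective ψ :=
    AdicCompletion.map_surjective I (Submodule.mkQ_surjective B₀)
  -- the image submodule matches
  have hmap : (ker ψ).map (eKer : AdicCompletion I Z →ₗ[R] ker (F (j + 1)))
      = Submodule.comap (ker (F (j + 1))).subtype (range (F j)) := by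
    ext x
    simp only [Submodule.mem_map, Submodule.mem_comap, LinearMap.mem_ker, Submodule.subtype_apply,
      LinearMap.mem_range]
    constructor
    · rintro ⟨z, hz1, rfl⟩
      have hz2 : z ∈ range (map I B₀.subtype) := exact2 z |>.mp hz1
      obtain ⟨w, rfl⟩ := hz2
      obtain ⟨v, rfl⟩ := AdicCompletion.map_surjective I hg''_surj w
      refine ⟨v, ?_⟩
      show map I (d j) v = ((eKer (map I B₀.subtype (map I g'' v))) : AdicCompletion I (C (j + 1)))
      have : (eKer (map I B₀.subtype (map I g'' v)) : AdicCompletion I (C (j + 1)))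
          = map I Z.subtype (map I B₀.subtype (map I g'' v)) := rfl
      have hcomp : (Z.subtype ∘ₗ B₀.subtype) ∘ₗ g'' = d j := rfl
      rw [this, AdicCompletion.map_comp_apply, AdicCompletion.map_comp_apply, hcomp]
    · rintro ⟨v, hv⟩
      refine ⟨map I g' v, ?_, ?_⟩
      · show map I B₀.mkQ (map I g' v) = 0
        rw [AdicCompletion.map_comp_apply, hzero, AdicCompletion.map_zero]
        rfl
      · apply Subtype.ext
        show ((eKer (map I g' v)) : AdicCompletion I (C (j + 1))) = (x : AdicCompletion I (C (j + 1)))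
        have : (eKer (map I g' v) : AdicCompletion I (C (j + 1))) = map I Z.subtype (map I g' v) := rfl
        rw [this, AdicCompletion.map_comp_apply, ← hdj]
        exact hv
  exact ⟨(Submodule.Quotient.equiv (ker ψ) _ eKer hmap).symm.trans
    (ψ.quotKerEquivOfSurjective hψ_surj)⟩
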